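/- Let C : ℕ → ℝ be a sequence with C(p) ≥ 0 for all p and C(0) = 0, such that for every z ∈ (0,1/4) the series ∑_{p≥1} C(p)·z^p converges with sum (3/2)·z/√(π·(1-z)·(1-4z)³). Define h(p) = 2√π·4^{-p}·C(p)/p for p ≥ 1. Then there exists a constant K > 0 such that h(p) ≤ K/√p for every p ≥ 1. -/

import Mathlib

open Set Finset

noncomputable def gfSeq (c : ℝ) : ℕ → ℝ
  | 0 => 1
  | n + 1 => gfSeq c n * (2 * n + c) / (2 * n + 2)

lemma gfSeq_nonneg {c : ℝ} (hc : 0 ≤ c) : ∀ n, 0 ≤ gfSeq c n := by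
  intro n
  induction n with
  | zero => norm_num [gfSeq]
  | succ k ih =>
    show 0 ≤ gfSeq c k * (2 * k + c) / (2 * k + 2)
    positivity

lemma gfSeq_rec (c : ℝ) (n : ℕ) :
    (2 * (n : ℝ) + 2) * gfSeq c (n + 1) = (2 * (n : ℝ) + c) * gfSeq c n := by
  show (2 * (n : ℝ) + 2) * (gfSeq c n * (2 * n + c) / (2 * n + 2)) = _
  have h : (2 * (n : ℝ) + 2) ≠ 0 := by positivity
  field_simp

lemma gfSeq_one_le_one : ∀ n, gfSeq 1 n ≤ 1 := by
  intro n
  induction n with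
  | zero => norm_num [gfSeq]
  | succ k ih =>
    show gfSeq 1 k * (2 * k + 1) / (2 * k + 2) ≤ 1
    have h0 := gfSeq_nonneg (by norm_num : (0:ℝ) ≤ 1) k
    have h2 : (0:ℝ) < 2 * k + 2 := by positivity
    rw [div_le_one h2]
    nlinarith

lemma gfSeq_three_le : ∀ n, gfSeq 3 n ≤ n + 1 := by
  intro n
  induction n with
  | zero => norm_num [gfSeq]
  | succ k ih =>
    have hs : gfSeq 3 (k+1) = gfSeq 3 k * (2 * (k:ℝ) + 3) / (2 * (k:ℝ) + 2) := rfl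
    rw [hs]; push_cast
    have h0 := gfSeq_nonneg (by norm_num : (0:ℝ) ≤ 3) k
    have h2 : (0:ℝ) < 2 * k + 2 := by positivity
    rw [div_le_iff₀ h2]
    nlinarith

lemma gfSeq_three_sq_le : ∀ n, (gfSeq 3 n) ^ 2 ≤ 4 * n + 3 := by
  intro n
  induction n with
  | zero => norm_num [gfSeq]
  | succ k ih =>
    have hs : gfSeq 3 (k+1) = gfSeq 3 k * (2 * (k:ℝ) + 3) / (2 * (k:ℝ) + 2) := rfl
    rw [hs]; push_cast
    have h0 := gfSeq_nonneg (by norm_num : (0:ℝ) ≤ 3) k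
    have h2 : (0:ℝ) < 2 * k + 2 := by positivity
    rw [div_pow, div_le_iff₀ (by positivity)]
    have key : (4 * (k:ℝ) + 3) * (2 * k + 3) ^ 2 ≤ (4 * k + 7) * (2 * k + 2) ^ 2 := by nlinarith
    nlinarith [sq_nonneg (gfSeq 3 k), mul_le_mul_of_nonneg_right ih (by positivity : (0:ℝ) ≤ (2*k+3)^2)]


section Gen

variable {q : ℕ → ℝ}

lemma aux_summable_poly {ρ : ℝ} (h : |ρ| < 1) :
    Summable (fun n : ℕ => ((n : ℝ) + 1) ^ 2 * ρ ^ n) := by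
  have hn : ‖ρ‖ < 1 := by rwa [Real.norm_eq_abs]
  have h0 := summable_pow_mul_geometric_of_norm_lt_one 0 hn
  have h1 := summable_pow_mul_geometric_of_norm_lt_one 1 hn
  have h2 := summable_pow_mul_geometric_of_norm_lt_one 2 hn
  have := (h2.add ((h1.mul_left 2))).add h0
  refine this.congr fun n => ?_
  ring

lemma gen_abs_summable (hnn : ∀ n, 0 ≤ q n) (hbd : ∀ n, q n ≤ n + 1)
    {y : ℝ} (hy : |y| < 1) : Summable (fun n => |q n * y ^ n|) := by
  refine Summable.of_nonneg_of_le (fun n => abs_nonneg _) (fun n => ?_)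
    (aux_summable_poly (by rwa [abs_abs]))
  rw [abs_mul, abs_pow, abs_of_nonneg (hnn n)]
  have h1 : q n ≤ ((n : ℝ) + 1) ^ 2 := le_trans (hbd n) (by nlinarith [Nat.cast_nonneg (α := ℝ) n])
  have h2 : (0:ℝ) ≤ |y| ^ n := by positivity
  nlinarith [pow_nonneg (abs_nonneg y) n, hnn n]

lemma gen_summable (hnn : ∀ n, 0 ≤ q n) (hbd : ∀ n, q n ≤ n + 1)
    {y : ℝ} (hy : |y| < 1) : Summable (fun n => q n * y ^ n) :=
  (gen_abs_summable hnn hbd hy).of_abs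

lemma gen_deriv_bound (hnn : ∀ n, 0 ≤ q n) (hbd : ∀ n, q n ≤ n + 1)
    {ρ : ℝ} (hρ : 0 < ρ) {y : ℝ} (hy : |y| ≤ ρ) (n : ℕ) :
    |q n * ((n : ℝ) * y ^ (n - 1))| ≤ ((n : ℝ) + 1) ^ 2 * ρ ^ n / ρ := by
  cases n with
  | zero => simp; positivity
  | succ k =>
    have hq := hnn (k + 1)
    have hb := hbd (k + 1)
    rw [abs_mul, abs_mul, abs_of_nonneg hq, Nat.add_sub_cancel, abs_pow,
      abs_of_nonneg (by positivity : (0:ℝ) ≤ ((k:ℕ) + 1 : ℕ))]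
    have hyk : |y| ^ k ≤ ρ ^ k := pow_le_pow_left₀ (abs_nonneg y) hy k
    have hρk : (0:ℝ) ≤ ρ ^ k := by positivity
    have heq : ((k + 1 : ℕ) : ℝ) + 1 = (k : ℝ) + 2 := by push_cast; ring
    rw [heq]
    have hrw : ((k:ℝ) + 2) ^ 2 * ρ ^ (k + 1) / ρ = ((k:ℝ) + 2) ^ 2 * ρ ^ k := by
      rw [pow_succ]; field_simp; ring
    rw [hrw]
    push_cast
    have h1 : q (k + 1) * (((k:ℝ) + 1) * |y| ^ k) ≤ ((k:ℝ) + 2) * (((k:ℝ) + 1) * ρ ^ k) := by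
      have : q (k+1) ≤ (k:ℝ) + 2 := by push_cast at hb; linarith
      have hyk' : ((k:ℝ)+1) * |y| ^ k ≤ ((k:ℝ)+1) * ρ ^ k := by
        apply mul_le_mul_of_nonneg_left hyk; positivity
      calc q (k + 1) * (((k:ℝ) + 1) * |y| ^ k) ≤ ((k:ℝ)+2) * (((k:ℝ) + 1) * |y| ^ k) := by
            apply mul_le_mul_of_nonneg_right this; positivity
        _ ≤ ((k:ℝ) + 2) * (((k:ℝ) + 1) * ρ ^ k) := by
            apply mul_le_mul_of_nonneg_left hyk'; positivity
    nlinarith [hρk]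

lemma gen_deriv_summable (hnn : ∀ n, 0 ≤ q n) (hbd : ∀ n, q n ≤ n + 1)
    {x : ℝ} (hx : |x| < 1) : Summable (fun n => q n * ((n : ℝ) * x ^ (n - 1))) := by
  set ρ : ℝ := (1 + |x|) / 2 with hρdef
  have h1 : |x| < ρ := by rw [hρdef]; linarith
  have h2 : ρ < 1 := by rw [hρdef]; linarith
  have h0 : 0 < ρ := lt_of_le_of_lt (abs_nonneg x) h1
  have hsum : Summable (fun n : ℕ => ((n : ℝ) + 1) ^ 2 * ρ ^ n / ρ) :=
    (aux_summable_poly (by rwa [abs_of_pos h0])).div_const ρ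
  refine Summable.of_abs (Summable.of_nonneg_of_le (fun n => abs_nonneg _)
    (fun n => gen_deriv_bound hnn hbd h0 h1.le n) hsum)

end Gen
section Gen2

variable {q : ℕ → ℝ}

lemma gen_hasSum (m : ℕ) (hq0 : q 0 = 1) (hnn : ∀ n, 0 ≤ q n)
    (hbd : ∀ n, q n ≤ n + 1)
    (hrec : ∀ n : ℕ, (2 * (n : ℝ) + 2) * q (n + 1) = (2 * (n : ℝ) + (m : ℝ) + 1) * q n) :
    ∀ x ∈ Set.Ioo (0 : ℝ) 1,
      HasSum (fun n => q n * x ^ n) (1 / Real.sqrt ((1 - x) ^ (m + 1))) := by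
  set U : ℝ → ℝ := fun y => ∑' n, q n * y ^ n with hU
  -- term-by-term derivative
  have hderiv : ∀ x ∈ Set.Ioo (-1 : ℝ) 1,
      HasDerivAt U (∑' n, q n * ((n : ℝ) * x ^ (n - 1))) x := by
    intro x hx
    have hx1 : |x| < 1 := abs_lt.2 ⟨hx.1, hx.2⟩
    set ρ : ℝ := (1 + |x|) / 2 with hρdef
    have h1 : |x| < ρ := by rw [hρdef]; linarith
    have h2 : ρ < 1 := by rw [hρdef]; linarith
    have h0 : 0 < ρ := lt_of_le_of_lt (abs_nonneg x) h1
    refine hasDerivAt_tsum_of_isPreconnected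
      (u := fun n : ℕ => ((n : ℝ) + 1) ^ 2 * ρ ^ n / ρ)
      (g := fun n y => q n * y ^ n) (g' := fun n y => q n * ((n : ℝ) * y ^ (n - 1)))
      (t := Set.Ioo (-ρ) ρ) (y₀ := 0)
      ((aux_summable_poly (by rwa [abs_of_pos h0])).div_const ρ)
      isOpen_Ioo (convex_Ioo _ _).isPreconnected
      (fun n y _ => (hasDerivAt_pow n y).const_mul (q n))
      (fun n y hy => ?_) ?_ ?_ ?_
    · rw [Real.norm_eq_abs]
      exact gen_deriv_bound hnn hbd h0 (abs_lt.2 ⟨hy.1, hy.2⟩).le n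
    · exact ⟨by linarith, h0⟩
    · exact gen_summable hnn hbd (by norm_num : |(0:ℝ)| < 1)
    · exact ⟨abs_lt.1 h1 |>.1, abs_lt.1 h1 |>.2⟩
  -- key identity 2(1-x)U' = (m+1)U
  have hkey : ∀ x ∈ Set.Ioo (-1 : ℝ) 1,
      2 * (1 - x) * (∑' n, q n * ((n : ℝ) * x ^ (n - 1))) = ((m : ℝ) + 1) * U x := by
    intro x hx
    have hx1 : |x| < 1 := abs_lt.2 ⟨hx.1, hx.2⟩
    have hP : Summable (fun n => q n * ((n : ℝ) * x ^ (n - 1))) :=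
      gen_deriv_summable hnn hbd hx1
    set P : ℝ := ∑' n, q n * ((n : ℝ) * x ^ (n - 1)) with hPdef
    have h1 : HasSum (fun n => q n * ((n : ℝ) * x ^ (n - 1))) P := hP.hasSum
    have h2 : HasSum (fun n => q (n + 1) * (((n : ℝ) + 1) * x ^ n)) P := by
      have h2' := (hasSum_nat_add_iff (f := fun k : ℕ => q k * ((k : ℝ) * x ^ (k - 1))) 1).2
        (by simpa using h1)
      refine h2'.congr_fun ?_ <;> try exact fun n => by simp [Nat.add_sub_cancel]
      
    have h3 : HasSum (fun n => q n * ((n : ℝ) * x ^ n)) (x * P) := by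
      have := h1.mul_left x
      have e0 : (fun n : ℕ => x * (q n * ((n : ℝ) * x ^ (n - 1))))
          = fun n : ℕ => q n * ((n : ℝ) * x ^ n) := by
        funext n
        cases n with
        | zero => simp
        | succ k => rw [Nat.add_sub_cancel, pow_succ]; push_cast; ring
      rwa [e0] at this
    have h4 : HasSum (fun n => q n * x ^ n) (U x) := (gen_summable hnn hbd hx1).hasSum
    have h5 : HasSum (fun n : ℕ =>
        2 * (q (n + 1) * (((n : ℝ) + 1) * x ^ n)) -
          (2 * (q n * ((n : ℝ) * x ^ n)) + ((m : ℝ) + 1) * (q n * x ^ n)))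
        (2 * P - (2 * (x * P) + ((m : ℝ) + 1) * U x)) :=
      (h2.mul_left 2).sub ((h3.mul_left 2).add (h4.mul_left _))
    have h6 : (fun n : ℕ =>
        2 * (q (n + 1) * (((n : ℝ) + 1) * x ^ n)) -
          (2 * (q n * ((n : ℝ) * x ^ n)) + ((m : ℝ) + 1) * (q n * x ^ n)))
        = fun _ : ℕ => (0 : ℝ) := by
      funext n
      have hr := hrec n
      have : 2 * (q (n + 1) * (((n : ℝ) + 1) * x ^ n)) -
          (2 * (q n * ((n : ℝ) * x ^ n)) + ((m : ℝ) + 1) * (q n * x ^ n))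
          = ((2 * (n : ℝ) + 2) * q (n + 1) - (2 * (n : ℝ) + (m : ℝ) + 1) * q n) * x ^ n := by
        ring
      rw [this, hr]; ring
    rw [h6] at h5
    have h7 : 2 * P - (2 * (x * P) + ((m : ℝ) + 1) * U x) = 0 := (hasSum_zero.unique h5).symm
    linarith [h7]
  -- W = (1-x)^(m+1) * U^2 has zero derivative
  set W : ℝ → ℝ := fun y => (1 - y) ^ (m + 1) * (U y) ^ 2 with hWdef
  have hW : ∀ x ∈ Set.Ioo (-1 : ℝ) 1, HasDerivAt W 0 x := by
    intro x hx
    have hd := hderiv x hx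
    have hkx := hkey x hx
    set P : ℝ := ∑' n, q n * ((n : ℝ) * x ^ (n - 1)) with hPdef
    have d0 : HasDerivAt (fun y : ℝ => 1 - y) (-1) x := by
      simpa using ((hasDerivAt_id x).const_sub 1)
    have d1 : HasDerivAt (fun y : ℝ => (1 - y) ^ (m + 1))
        (-(((m : ℝ) + 1) * (1 - x) ^ m)) x := by
      have := (hasDerivAt_pow (m + 1) (1 - x)).comp x d0
      refine this.congr_deriv ?_
      push_cast; ring
    have d2 : HasDerivAt (fun y => (U y) ^ 2) (2 * U x * P) x := by
      simpa using hd.fun_pow 2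
    have := d1.mul d2
    refine this.congr_deriv (Eq.symm ?_)
    have hps : (1 - x) ^ (m + 1) = (1 - x) ^ m * (1 - x) := pow_succ _ _
    rw [hps]
    linear_combination (-(1 - x) ^ m * U x) * hkx
  intro x hx
  have hx1 : |x| < 1 := by rw [abs_of_pos hx.1]; exact hx.2
  have hsub : Set.Icc (0 : ℝ) x ⊆ Set.Ioo (-1 : ℝ) 1 := fun y hy =>
    ⟨lt_of_lt_of_le (by norm_num) hy.1, lt_of_le_of_lt hy.2 hx.2⟩
  have hcont : ContinuousOn W (Set.Icc 0 x) := fun y hy =>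
    ((hW y (hsub hy)).continuousAt).continuousWithinAt
  have hconst := constant_of_has_deriv_right_zero hcont
    (fun y hy => (hW y (hsub (Set.Ico_subset_Icc_self hy))).hasDerivWithinAt)
    x (Set.right_mem_Icc.2 hx.1.le)
  have hU0 : U 0 = 1 := by
    show (∑' n, q n * (0:ℝ) ^ n) = 1
    rw [tsum_eq_single 0 (fun n hn => by simp [zero_pow hn])]
    simp [hq0]
  have hW0 : W 0 = 1 := by show (1 - (0:ℝ)) ^ (m + 1) * (U 0) ^ 2 = 1; rw [hU0]; norm_num
  rw [hW0] at hconst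
  -- hconst : W x = 1
  have hUge : 1 ≤ U x := by
    have h4 : Summable (fun n => q n * x ^ n) := gen_summable hnn hbd hx1
    have := h4.le_tsum 0 (fun j _ => mul_nonneg (hnn j) (pow_nonneg hx.1.le j))
    simpa [hq0] using this
  have ht : (0 : ℝ) < (1 - x) ^ (m + 1) := pow_pos (by linarith [hx.2]) _
  have hconst' : (1 - x) ^ (m + 1) * (U x) ^ 2 = 1 := hconst
  have hUsq : (U x) ^ 2 = ((1 - x) ^ (m + 1))⁻¹ := by
    field_simp
    linear_combination hconst'
  have hUval : U x = 1 / Real.sqrt ((1 - x) ^ (m + 1)) := by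
    have h1 : U x = Real.sqrt ((U x) ^ 2) := (Real.sqrt_sq (by linarith)).symm
    rw [h1, hUsq, Real.sqrt_inv, one_div]
  have hfin := (gen_summable hnn hbd hx1).hasSum
  rw [← hUval]
  exact hfin

end Gen2
set_option maxHeartbeats 1000000 in
lemma coeff_unique (A B : ℕ → ℝ) (F : ℝ → ℝ) (z1 : ℝ) (hz1 : 0 < z1)
    (hAnn : ∀ p, 0 ≤ A p) (hBnn : ∀ p, 0 ≤ B p)
    (hA : ∀ z ∈ Set.Ioo (0 : ℝ) z1, HasSum (fun p => A p * z ^ p) (F z))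
    (hB : ∀ z ∈ Set.Ioo (0 : ℝ) z1, HasSum (fun p => B p * z ^ p) (F z)) :
    ∀ p, A p = B p := by
  intro p
  induction p using Nat.strong_induction_on with
  | _ p ih =>
  set z0 : ℝ := z1 / 2 with hz0def
  have hz0 : 0 < z0 := by positivity
  have hz0m : z0 ∈ Set.Ioo (0 : ℝ) z1 := ⟨hz0, by rw [hz0def]; linarith⟩
  -- the dominating constant
  have hSz0 : Summable (fun k => (A k + B k) * z0 ^ k) := by
    have := ((hA z0 hz0m).add (hB z0 hz0m)).summable
    refine this.congr fun k => by ring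
  set M : ℝ := ∑' k, (A k + B k) * z0 ^ k with hMdef
  have hterm_nn : ∀ k, 0 ≤ (A k + B k) * z0 ^ k := fun k =>
    mul_nonneg (by linarith [hAnn k, hBnn k]) (pow_nonneg hz0.le k)
  -- main estimate for z ∈ (0, z0)
  have hmain : ∀ z ∈ Set.Ioo (0 : ℝ) z0, |A p - B p| * z ^ p ≤ (z / z0) ^ (p + 1) * M := by
    intro z hz
    have hzz1 : z ∈ Set.Ioo (0 : ℝ) z1 := ⟨hz.1, lt_trans hz.2 (by rw [hz0def]; linarith)⟩
    have hE : HasSum (fun k => (A k - B k) * z ^ k) 0 := by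
      have := (hA z hzz1).sub (hB z hzz1)
      rw [sub_self] at this
      refine this.congr_fun fun k => by ring
    -- split off the first p+1 terms
    have htail : HasSum (fun k => (A (k + (p + 1)) - B (k + (p + 1))) * z ^ (k + (p + 1)))
        (0 - (A p - B p) * z ^ p) := by
      apply (hasSum_nat_add_iff (f := fun k => (A k - B k) * z ^ k) (p + 1)).2
      refine Eq.subst (motive := fun s => HasSum (fun k => (A k - B k) * z ^ k) s) ?_ hE
      have hsum0 : ∑ i ∈ Finset.range (p + 1), (A i - B i) * z ^ i = (A p - B p) * z ^ p := by
        rw [Finset.sum_range_succ]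
        have : ∑ i ∈ Finset.range p, (A i - B i) * z ^ i = 0 :=
          Finset.sum_eq_zero fun i hi => by
            rw [ih i (Finset.mem_range.1 hi)]; ring
        rw [this]; ring
      rw [hsum0]
      ring
    -- htail : HasSum (fun k => (A (k+p+1) - B (k+p+1)) * z^(k+p+1)) (0 - (A p - B p) * z^p)
    have hbound : ∀ k : ℕ,
        |(A (k + (p + 1)) - B (k + (p + 1))) * z ^ (k + (p + 1))| ≤
          (z / z0) ^ (p + 1) * ((A (k + (p + 1)) + B (k + (p + 1))) * z0 ^ (k + (p + 1))) := by
      intro k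
      rw [abs_mul, abs_pow, abs_of_pos hz.1]
      have h1 : |A (k + (p + 1)) - B (k + (p + 1))| ≤ A (k + (p + 1)) + B (k + (p + 1)) := by
        rw [abs_sub_le_iff]
        constructor <;> linarith [hAnn (k + (p + 1)), hBnn (k + (p + 1))]
      have h2 : z ^ (k + (p + 1)) ≤ (z / z0) ^ (p + 1) * z0 ^ (k + (p + 1)) := by
        have hq : z / z0 < 1 := (div_lt_one hz0).2 hz.2
        have hqnn : 0 ≤ z / z0 := div_nonneg hz.1.le hz0.le
        have e1 : z ^ (k + (p + 1)) = (z / z0) ^ (k + (p + 1)) * z0 ^ (k + (p + 1)) := by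
          rw [← mul_pow]
          congr 1
          field_simp
        rw [e1]
        have : (z / z0) ^ (k + (p + 1)) ≤ (z / z0) ^ (p + 1) :=
          pow_le_pow_of_le_one hqnn hq.le (by omega)
        exact mul_le_mul_of_nonneg_right this (pow_nonneg hz0.le _)
      calc |A (k + (p + 1)) - B (k + (p + 1))| * z ^ (k + (p + 1))
          ≤ (A (k + (p + 1)) + B (k + (p + 1))) * ((z / z0) ^ (p + 1) * z0 ^ (k + (p + 1))) := by
            apply mul_le_mul h1 h2 (pow_nonneg hz.1.le _)
            linarith [hAnn (k + (p + 1)), hBnn (k + (p + 1))]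
        _ = (z / z0) ^ (p + 1) * ((A (k + (p + 1)) + B (k + (p + 1))) * z0 ^ (k + (p + 1))) := by
            ring
    have hsumtail : Summable (fun k => (A (k + (p + 1)) + B (k + (p + 1))) * z0 ^ (k + (p + 1))) :=
      (summable_nat_add_iff (p + 1)).2 hSz0
    have habs : |0 - (A p - B p) * z ^ p| ≤
        ∑' k, (z / z0) ^ (p + 1) * ((A (k + (p + 1)) + B (k + (p + 1))) * z0 ^ (k + (p + 1))) := by
      have h1 : |0 - (A p - B p) * z ^ p| ≤ ∑' k, |(A (k + (p + 1)) - B (k + (p + 1))) * z ^ (k + (p + 1))| := by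
        have hs : Summable (fun k => ‖(A (k + (p + 1)) - B (k + (p + 1))) * z ^ (k + (p + 1))‖) := by
          simp only [Real.norm_eq_abs]
          exact Summable.of_nonneg_of_le (fun k => abs_nonneg _) hbound (hsumtail.mul_left _)
        have h2 := norm_tsum_le_tsum_norm hs
        rw [htail.tsum_eq] at h2
        simp only [Real.norm_eq_abs] at h2
        exact h2
      refine le_trans h1 (Summable.tsum_le_tsum hbound ?_ (hsumtail.mul_left _))
      refine Summable.of_nonneg_of_le (fun k => abs_nonneg _) hbound (hsumtail.mul_left _)
    have htm : ∑' k, (z / z0) ^ (p + 1) * ((A (k + (p + 1)) + B (k + (p + 1))) * z0 ^ (k + (p + 1)))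
        = (z / z0) ^ (p + 1) * ∑' k, (A (k + (p + 1)) + B (k + (p + 1))) * z0 ^ (k + (p + 1)) :=
      tsum_mul_left
    have htailM : ∑' k, (A (k + (p + 1)) + B (k + (p + 1))) * z0 ^ (k + (p + 1)) ≤ M := by
      have heq := (Summable.sum_add_tsum_nat_add (f := fun k => (A k + B k) * z0 ^ k) (p + 1) hSz0).symm
      have hfin : 0 ≤ ∑ i ∈ Finset.range (p + 1), (A i + B i) * z0 ^ i :=
        Finset.sum_nonneg fun i _ => hterm_nn i
      rw [hMdef]
      nlinarith [heq, hfin]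
    rw [htm] at habs
    have hfac : (0:ℝ) ≤ (z / z0) ^ (p + 1) := pow_nonneg (div_nonneg hz.1.le hz0.le) _
    calc |A p - B p| * z ^ p = |0 - (A p - B p) * z ^ p| := by
          rw [zero_sub, abs_neg, abs_mul, abs_pow, abs_of_pos hz.1]
      _ ≤ (z / z0) ^ (p + 1) * ∑' k, (A (k + (p + 1)) + B (k + (p + 1))) * z0 ^ (k + (p + 1)) := habs
      _ ≤ (z / z0) ^ (p + 1) * M := mul_le_mul_of_nonneg_left htailM hfac
  -- deduce |A p - B p| ≤ c * z for all small z, hence = 0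
  have hMnn : 0 ≤ M := tsum_nonneg hterm_nn
  have hlin : ∀ z ∈ Set.Ioo (0 : ℝ) z0, |A p - B p| ≤ (M / z0 ^ (p + 1)) * z := by
    intro z hz
    have h := hmain z hz
    have hzp : (0:ℝ) < z ^ p := pow_pos hz.1 p
    have e1 : (z / z0) ^ (p + 1) * M = M / z0 ^ (p + 1) * (z ^ p * z) := by
      rw [div_pow]
      field_simp
      ring
    rw [e1] at h
    have := (mul_le_mul_iff_left₀ hzp).1 (by linarith [h] : |A p - B p| * z ^ p ≤ (M / z0 ^ (p + 1) * z) * z ^ p)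
    linarith
  have hzero : |A p - B p| ≤ 0 := by
    have htend : Filter.Tendsto (fun z : ℝ => (M / z0 ^ (p + 1)) * z)
        (nhdsWithin 0 (Set.Ioi 0)) (nhds 0) := by
      have : Filter.Tendsto (fun z : ℝ => (M / z0 ^ (p + 1)) * z) (nhds 0) (nhds ((M / z0 ^ (p + 1)) * 0)) :=
        (continuous_const.mul continuous_id).tendsto 0
      rw [mul_zero] at this
      exact this.mono_left nhdsWithin_le_nhds
    refine ge_of_tendsto htend ?_
    filter_upwards [Ioo_mem_nhdsGT_of_mem (by constructor <;> [exact le_rfl; exact hz0] : (0:ℝ) ∈ Set.Ico 0 z0)] with z hz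
    exact hlin z hz
  have := abs_nonneg (A p - B p)
  have : |A p - B p| = 0 := le_antisymm hzero this
  have := abs_eq_zero.1 this
  linarith
noncomputable def Ecoef (n : ℕ) : ℝ :=
  ∑ k ∈ Finset.range (n + 1), gfSeq 1 k * (gfSeq 3 (n - k) * 4 ^ (n - k))

noncomputable def Dcoef : ℕ → ℝ
  | 0 => 0
  | n + 1 => 3 / (2 * Real.sqrt Real.pi) * Ecoef n

lemma Ecoef_nonneg (n : ℕ) : 0 ≤ Ecoef n :=
  Finset.sum_nonneg fun k _ => mul_nonneg (gfSeq_nonneg (by norm_num) k)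
    (mul_nonneg (gfSeq_nonneg (by norm_num) _) (by positivity))

lemma Dcoef_nonneg (p : ℕ) : 0 ≤ Dcoef p := by
  cases p with
  | zero => exact le_refl 0
  | succ n =>
    show 0 ≤ 3 / (2 * Real.sqrt Real.pi) * Ecoef n
    have := Real.sqrt_pos.2 Real.pi_pos
    exact mul_nonneg (by positivity) (Ecoef_nonneg n)

lemma gfSeq3_le_sqrt (j : ℕ) : gfSeq 3 j ≤ 2 * Real.sqrt ((j : ℝ) + 1) := by
  have h1 : gfSeq 3 j = Real.sqrt ((gfSeq 3 j) ^ 2) :=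
    (Real.sqrt_sq (gfSeq_nonneg (by norm_num) j)).symm
  rw [h1]
  have h2 : (gfSeq 3 j) ^ 2 ≤ 4 * ((j : ℝ) + 1) := by
    have := gfSeq_three_sq_le j
    linarith
  calc Real.sqrt ((gfSeq 3 j) ^ 2) ≤ Real.sqrt (4 * ((j : ℝ) + 1)) := Real.sqrt_le_sqrt h2
    _ = 2 * Real.sqrt ((j : ℝ) + 1) := by
        rw [show (4 : ℝ) * ((j : ℝ) + 1) = 2 ^ 2 * ((j : ℝ) + 1) by ring, Real.sqrt_mul (by positivity),
          Real.sqrt_sq (by norm_num : (0:ℝ) ≤ 2)]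

lemma Ecoef_le (n : ℕ) : Ecoef n ≤ Real.sqrt ((n : ℝ) + 1) * 4 ^ (n + 1) := by
  have hsq : (0:ℝ) ≤ Real.sqrt ((n : ℝ) + 1) := Real.sqrt_nonneg _
  have h1 : Ecoef n ≤ ∑ k ∈ Finset.range (n + 1), 2 * Real.sqrt ((n : ℝ) + 1) * 4 ^ (n - k) := by
    refine Finset.sum_le_sum fun k hk => ?_
    have hk' : k ≤ n := Nat.lt_succ_iff.1 (Finset.mem_range.1 hk)
    have hb1 : gfSeq 1 k ≤ 1 := gfSeq_one_le_one k
    have hb3 : gfSeq 3 (n - k) ≤ 2 * Real.sqrt ((n : ℝ) + 1) := by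
      refine le_trans (gfSeq3_le_sqrt (n - k)) ?_
      have hle : ((n - k : ℕ) : ℝ) + 1 ≤ (n : ℝ) + 1 := by
        have h' : (n - k : ℕ) ≤ n := Nat.sub_le n k
        have := (Nat.cast_le (α := ℝ)).2 h'
        linarith
      exact mul_le_mul_of_nonneg_left (Real.sqrt_le_sqrt hle) (by norm_num)
    have h4 : (0:ℝ) ≤ 4 ^ (n - k) := by positivity
    have h3nn : 0 ≤ gfSeq 3 (n - k) := gfSeq_nonneg (by norm_num) _
    have h1nn : 0 ≤ gfSeq 1 k := gfSeq_nonneg (by norm_num) k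
    calc gfSeq 1 k * (gfSeq 3 (n - k) * 4 ^ (n - k)) ≤ 1 * (gfSeq 3 (n - k) * 4 ^ (n - k)) := by
          apply mul_le_mul_of_nonneg_right hb1; positivity
      _ = gfSeq 3 (n - k) * 4 ^ (n - k) := one_mul _
      _ ≤ (2 * Real.sqrt ((n : ℝ) + 1)) * 4 ^ (n - k) := mul_le_mul_of_nonneg_right hb3 h4
  have h2 : ∑ k ∈ Finset.range (n + 1), 2 * Real.sqrt ((n : ℝ) + 1) * 4 ^ (n - k)
      = 2 * Real.sqrt ((n : ℝ) + 1) * ((4 ^ (n + 1) - 1) / 3) := by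
    rw [← Finset.mul_sum]
    congr 1
    have hrefl : ∑ k ∈ Finset.range (n + 1), (4:ℝ) ^ (n + 1 - 1 - k)
        = ∑ k ∈ Finset.range (n + 1), (4:ℝ) ^ k := Finset.sum_range_reflect (fun j => (4:ℝ) ^ j) (n + 1)
    simp only [Nat.add_sub_cancel] at hrefl
    rw [hrefl, geom_sum_eq (by norm_num : (4:ℝ) ≠ 1)]
    norm_num
  have h3 : (1:ℝ) ≤ 4 ^ (n + 1) := one_le_pow₀ (by norm_num)
  rw [h2] at h1
  nlinarith [hsq, h3]
lemma gfSeq_one_bd : ∀ n : ℕ, gfSeq 1 n ≤ (n : ℝ) + 1 := fun n =>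
  le_trans (gfSeq_one_le_one n) (by linarith [Nat.cast_nonneg (α := ℝ) n])

lemma Dcoef_hasSum : ∀ z ∈ Set.Ioo (0 : ℝ) (1 / 4),
    HasSum (fun p => Dcoef p * z ^ p)
      (3 / 2 * z / Real.sqrt (Real.pi * (1 - z) * (1 - 4 * z) ^ 3)) := by
  intro z hz
  have hz0 : 0 < z := hz.1
  have hz4 : z < 1 / 4 := hz.2
  have hz1 : z ∈ Set.Ioo (0 : ℝ) 1 := ⟨hz0, by linarith⟩
  have h4z : 4 * z ∈ Set.Ioo (0 : ℝ) 1 := ⟨by linarith, by linarith⟩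
  have habs_z : |z| < 1 := by rw [abs_of_pos hz0]; linarith
  have habs_4z : |4 * z| < 1 := by rw [abs_of_pos (by linarith : (0:ℝ) < 4 * z)]; linarith
  have hrec1 : ∀ n : ℕ, (2 * (n : ℝ) + 2) * gfSeq 1 (n + 1)
      = (2 * (n : ℝ) + ((0 : ℕ) : ℝ) + 1) * gfSeq 1 n := by
    intro n
    have := gfSeq_rec 1 n
    push_cast
    linarith
  have hrec3 : ∀ n : ℕ, (2 * (n : ℝ) + 2) * gfSeq 3 (n + 1)
      = (2 * (n : ℝ) + ((2 : ℕ) : ℝ) + 1) * gfSeq 3 n := by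
    intro n
    have := gfSeq_rec 3 n
    push_cast
    linarith
  have hS1 := gen_hasSum (q := gfSeq 1) 0 rfl (gfSeq_nonneg (by norm_num)) gfSeq_one_bd
    hrec1 z hz1
  simp only [zero_add, pow_one] at hS1
  have hS3 := gen_hasSum (q := gfSeq 3) 2 rfl (gfSeq_nonneg (by norm_num)) gfSeq_three_le
    hrec3 (4 * z) h4z
  -- hS3 : HasSum (fun n => gfSeq 3 n * (4*z)^n) (1 / sqrt ((1 - 4*z)^3))
  have hS3' : HasSum (fun n => gfSeq 3 n * 4 ^ n * z ^ n)
      (1 / Real.sqrt ((1 - 4 * z) ^ (2 + 1))) := by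
    refine hS3.congr_fun fun n => ?_
    rw [mul_pow]
    ring
  have hf_norm : Summable (fun n => ‖gfSeq 1 n * z ^ n‖) := by
    simp only [Real.norm_eq_abs]
    exact gen_abs_summable (gfSeq_nonneg (by norm_num)) gfSeq_one_bd habs_z
  have hg_norm : Summable (fun n => ‖gfSeq 3 n * 4 ^ n * z ^ n‖) := by
    have h0 := gen_abs_summable (gfSeq_nonneg (by norm_num : (0:ℝ) ≤ 3)) gfSeq_three_le habs_4z
    refine h0.congr fun n => ?_
    rw [Real.norm_eq_abs, mul_pow]
    congr 1
    ring
  have hprod := hasSum_sum_range_mul_of_summable_norm hf_norm hg_norm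
  rw [hS1.tsum_eq, hS3'.tsum_eq] at hprod
  have hprod' : HasSum (fun n => Ecoef n * z ^ n)
      (1 / Real.sqrt (1 - z) * (1 / Real.sqrt ((1 - 4 * z) ^ (2 + 1)))) := by
    refine hprod.congr_fun fun n => ?_
    rw [Ecoef, Finset.sum_mul]
    refine Finset.sum_congr rfl fun k hk => ?_
    have hk' : k ≤ n := Nat.lt_succ_iff.1 (Finset.mem_range.1 hk)
    have hzz : z ^ k * z ^ (n - k) = z ^ n := by
      rw [← pow_add, Nat.add_sub_cancel' hk']
    calc gfSeq 1 k * (gfSeq 3 (n - k) * 4 ^ (n - k)) * z ^ n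
        = gfSeq 1 k * (gfSeq 3 (n - k) * 4 ^ (n - k)) * (z ^ k * z ^ (n - k)) := by rw [hzz]
      _ = gfSeq 1 k * z ^ k * (gfSeq 3 (n - k) * 4 ^ (n - k) * z ^ (n - k)) := by ring
  set c : ℝ := 3 / (2 * Real.sqrt Real.pi) with hcdef
  have hmul := hprod'.mul_left (c * z)
  have heq : (fun n => Dcoef (n + 1) * z ^ (n + 1))
      = fun n => c * z * (Ecoef n * z ^ n) := by
    funext n
    show c * Ecoef n * z ^ (n + 1) = _
    rw [pow_succ]
    ring
  have h2 : HasSum (fun n => Dcoef (n + 1) * z ^ (n + 1))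
      (c * z * (1 / Real.sqrt (1 - z) * (1 / Real.sqrt ((1 - 4 * z) ^ (2 + 1))))) := by
    rw [heq]; exact hmul
  have h3 := (hasSum_nat_add_iff (f := fun p => Dcoef p * z ^ p) 1).1 h2
  have h0 : ∑ i ∈ Finset.range 1, Dcoef i * z ^ i = 0 := by
    simp [Dcoef]
  rw [h0, add_zero] at h3
  have hval : c * z * (1 / Real.sqrt (1 - z) * (1 / Real.sqrt ((1 - 4 * z) ^ (2 + 1))))
      = 3 / 2 * z / Real.sqrt (Real.pi * (1 - z) * (1 - 4 * z) ^ 3) := by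
    have h1z : (0:ℝ) < 1 - z := by linarith
    have h14z : (0:ℝ) < 1 - 4 * z := by linarith
    have hsπ : 0 < Real.sqrt Real.pi := Real.sqrt_pos.2 Real.pi_pos
    have hs1 : 0 < Real.sqrt (1 - z) := Real.sqrt_pos.2 h1z
    have hs3 : 0 < Real.sqrt ((1 - 4 * z) ^ 3) := Real.sqrt_pos.2 (by positivity)
    have hsqrt : Real.sqrt (Real.pi * (1 - z) * (1 - 4 * z) ^ 3)
        = Real.sqrt Real.pi * Real.sqrt (1 - z) * Real.sqrt ((1 - 4 * z) ^ 3) := by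
      rw [Real.sqrt_mul (by positivity), Real.sqrt_mul Real.pi_pos.le]
    rw [hsqrt, hcdef]
    have h23 : (2 + 1 : ℕ) = 3 := rfl
    rw [h23]
    field_simp
  rwa [hval] at h3

theorem stmt_14 (C : ℕ → ℝ) (hC0 : C 0 = 0) (hnn : ∀ p, 0 ≤ C p)
    (hgen : ∀ z ∈ Set.Ioo (0 : ℝ) (1 / 4),
      HasSum (fun p : ℕ => C p * z ^ p)
        ((3 / 2) * z / Real.sqrt (Real.pi * (1 - z) * (1 - 4 * z) ^ 3))) :
    ∃ K > (0 : ℝ), ∀ p : ℕ, 1 ≤ p →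
      2 * Real.sqrt Real.pi * (4 : ℝ) ^ (-(p : ℤ)) * C p / p ≤ K / Real.sqrt p := by
  have hCD : ∀ p, C p = Dcoef p :=
    coeff_unique C Dcoef _ (1 / 4) (by norm_num) hnn Dcoef_nonneg hgen Dcoef_hasSum
  refine ⟨3, by norm_num, ?_⟩
  intro p hp
  obtain ⟨n, rfl⟩ : ∃ n, p = n + 1 := ⟨p - 1, by omega⟩
  have hC : C (n + 1) = 3 / (2 * Real.sqrt Real.pi) * Ecoef n := hCD (n + 1)
  have hsπ : 0 < Real.sqrt Real.pi := Real.sqrt_pos.2 Real.pi_pos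
  have hpR : (0:ℝ) < (n : ℝ) + 1 := by positivity
  have hsp : 0 < Real.sqrt ((n : ℝ) + 1) := Real.sqrt_pos.2 hpR
  have hspsq : Real.sqrt ((n : ℝ) + 1) * Real.sqrt ((n : ℝ) + 1) = (n : ℝ) + 1 :=
    Real.mul_self_sqrt hpR.le
  have h4p : (0:ℝ) < 4 ^ (n + 1) := by positivity
  have hE := Ecoef_le n
  have hzpow : (4 : ℝ) ^ (-((n + 1 : ℕ) : ℤ)) = ((4 : ℝ) ^ (n + 1))⁻¹ := by
    rw [zpow_neg, zpow_natCast]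
  rw [hC, hzpow]
  have hcast : ((n + 1 : ℕ) : ℝ) = (n : ℝ) + 1 := by push_cast; ring
  rw [hcast]
  have hLHS : 2 * Real.sqrt Real.pi * ((4:ℝ) ^ (n + 1))⁻¹ *
      (3 / (2 * Real.sqrt Real.pi) * Ecoef n) / ((n : ℝ) + 1)
      = 3 * Ecoef n / (4 ^ (n + 1) * ((n : ℝ) + 1)) := by
    field_simp
  rw [hLHS, div_le_div_iff₀ (by positivity) hsp]
  nlinarith [hE, hspsq, hsp, h4p, mul_le_mul_of_nonneg_right hE hsp.le]
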